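/- Let 0 < η < π/3 and a = e^{-iη}/(2cos η), c = 1/(1-|a|⁴), and suppose w₀ := 1 - c|a|² < 0. Then w₀ lies in the closed triangle with vertices 0, z₂ = c·a³, and z₃ = c·a⁴, and also in the closed triangle with vertices 0, conj(z₂), conj(z₃). In particular the segment from z₂ to z₃ meets the real axis at the point -c|a|⁴. -/

import Mathlib

open Real Set

lemma stmt5_helper (A R : ℂ) (hA : A^2 = A - R) :
    (2*R-1)*A^3 + (1-R)*A^4 = -R^3 := by
  linear_combination ((1-R)*A^2 + R*A + R^2) * hA

theorem stmt5 (η : ℝ) (hη0 : 0 < η) (hη1 : η < π / 3)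
    (a : ℂ) (ha : a = Complex.exp (-(η : ℂ) * Complex.I) / (2 * Real.cos η))
    (c : ℝ) (hc : c = 1 / (1 - ‖a‖ ^ 4))
    (z : ℕ → ℂ) (hz : ∀ k, z k = (c : ℂ) * a ^ (k + 1))
    (w₀ : ℂ) (hw₀ : w₀ = 1 - (c : ℂ) * (‖a‖ : ℂ) ^ 2)
    (hneg : w₀.re < 0) :
    w₀ ∈ convexHull ℝ ({0, z 2, z 3} : Set ℂ) ∧
    w₀ ∈ convexHull ℝ ({0, (starRingEnd ℂ) (z 2), (starRingEnd ℂ) (z 3)} : Set ℂ) ∧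
    (-(c : ℂ) * (‖a‖ : ℂ) ^ 4) ∈ segment ℝ (z 2) (z 3) := by
  have hpi := Real.pi_pos
  have hcos2 : (1:ℝ)/2 < Real.cos η := by
    have h := Real.cos_lt_cos_of_nonneg_of_le_pi (le_of_lt hη0) (by linarith) hη1
    rwa [Real.cos_pi_div_three] at h
  have hcpos : (0:ℝ) < Real.cos η := by linarith
  set E : ℂ := Complex.exp (-(η:ℂ)*Complex.I) with hE
  set C : ℂ := ((Real.cos η : ℝ) : ℂ) with hCdef
  have hCne : C ≠ 0 := by
    rw [hCdef]; exact_mod_cast hcpos.ne'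
  set r : ℝ := ‖a‖ with hrdef
  have hr : r = 1 / (2 * Real.cos η) := by
    rw [hrdef, ha, norm_div, norm_mul, Complex.norm_two, Complex.norm_real, Real.norm_eq_abs,
      abs_of_pos hcpos, Complex.norm_exp]
    norm_num
  have hr0 : 0 < r := by rw [hr]; positivity
  have hr1 : r < 1 := by
    rw [hr, div_lt_one (by linarith)]; linarith
  -- key algebraic identity
  have hexp : E * Complex.exp ((η:ℂ)*Complex.I) = 1 := by
    rw [hE, ← Complex.exp_add]
    norm_num
  have hcosC : 2 * C = Complex.exp ((η:ℂ)*Complex.I) + E := by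
    rw [hCdef, hE, Complex.ofReal_cos, Complex.cos]
    ring
  have hE2 : E * (2 * C) = E^2 + 1 := by
    linear_combination E * hcosC + hexp
  have hrC : (r:ℂ) = 1 / (2 * C) := by
    rw [hr, hCdef]; push_cast; ring
  have key : a^2 = a - (r:ℂ)^2 := by
    rw [ha, hrC]
    field_simp
    linear_combination (-1) * hE2
  -- real inequalities
  have hr41 : r^4 < 1 := pow_lt_one₀ hr0.le hr1 (by norm_num)
  have h14 : (0:ℝ) < 1 - r^4 := by linarith
  have hc1 : c * (1 - r^4) = 1 := by
    rw [hc]; field_simp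
  have hc0 : 0 < c := by
    rw [hc]; exact one_div_pos.mpr h14
  have hwre : w₀ = ((1 - c * r^2 : ℝ) : ℂ) := by
    rw [hw₀]; push_cast; ring
  have hneg' : 1 < c * r^2 := by
    rw [hwre, Complex.ofReal_re] at hneg; linarith
  have hRhalf : 1/2 < r^2 := by nlinarith
  set lam : ℝ := (2*r^2 - 1)/(r^2) with hlam
  have hlam0 : 0 ≤ lam := by
    apply div_nonneg (by nlinarith) (by positivity)
  have hlam1 : lam ≤ 1 := by
    rw [hlam, div_le_one (by positivity)]; nlinarith
  set t : ℝ := (c*r^2 - 1)/(c*r^4) with htdef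
  have hcr4 : (0:ℝ) < c * r^4 := mul_pos hc0 (pow_pos hr0 4)
  have ht0 : 0 ≤ t := div_nonneg (by linarith) hcr4.le
  have ht1 : t ≤ 1 := by
    rw [htdef, div_le_one hcr4]; nlinarith
  have hr2ne : ((r:ℂ))^2 ≠ 0 :=
    pow_ne_zero 2 (by exact_mod_cast hr0.ne' : (r:ℂ) ≠ 0)
  have H := stmt5_helper a ((r:ℂ)^2) key
  -- segment membership of p
  have hseg : (-(c : ℂ) * ((r:ℝ) : ℂ) ^ 4) ∈ segment ℝ (z 2) (z 3) := by
    refine ⟨lam, 1 - lam, hlam0, by linarith, by ring, ?_⟩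
    rw [hz 2, hz 3]
    simp only [Complex.real_smul]
    push_cast [hlam]
    have hrne : (r:ℂ) ≠ 0 := by exact_mod_cast hr0.ne'
    field_simp
    linear_combination (c:ℂ) * H
  have htp : t * (c * r^4) = c * r^2 - 1 := by
    rw [htdef]; field_simp
  have hwseg : w₀ ∈ segment ℝ (0:ℂ) (-(c : ℂ) * ((r:ℝ) : ℂ) ^ 4) := by
    refine ⟨1 - t, t, by linarith, ht0, by ring, ?_⟩
    have hh := congrArg (Complex.ofReal) htp
    push_cast at hh
    rw [hwre]
    simp only [smul_zero, Complex.real_smul, zero_add]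
    push_cast
    linear_combination -hh
  have hconv := convex_convexHull ℝ ({0, z 2, z 3} : Set ℂ)
  have hsub : segment ℝ (z 2) (z 3) ⊆ convexHull ℝ ({0, z 2, z 3} : Set ℂ) := by
    rw [← convexHull_pair]
    exact convexHull_mono (by intro x hx; simp at hx ⊢; tauto)
  have h0 : (0:ℂ) ∈ convexHull ℝ ({0, z 2, z 3} : Set ℂ) :=
    subset_convexHull ℝ _ (by simp)
  have first : w₀ ∈ convexHull ℝ ({0, z 2, z 3} : Set ℂ) :=
    hconv.segment_subset h0 (hsub hseg) hwseg
  -- conjugate version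
  have hsegc : (-(c : ℂ) * ((r:ℝ) : ℂ) ^ 4)
      ∈ segment ℝ ((starRingEnd ℂ) (z 2)) ((starRingEnd ℂ) (z 3)) := by
    obtain ⟨u, v, hu, hv, huv, heq⟩ := hseg
    refine ⟨u, v, hu, hv, huv, ?_⟩
    have hh := congrArg (starRingEnd ℂ) heq
    simpa [Complex.real_smul, map_add, map_mul, Complex.conj_ofReal] using hh
  have hconvc := convex_convexHull ℝ ({0, (starRingEnd ℂ) (z 2), (starRingEnd ℂ) (z 3)} : Set ℂ)
  have hsubc : segment ℝ ((starRingEnd ℂ) (z 2)) ((starRingEnd ℂ) (z 3))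
      ⊆ convexHull ℝ ({0, (starRingEnd ℂ) (z 2), (starRingEnd ℂ) (z 3)} : Set ℂ) := by
    rw [← convexHull_pair]
    exact convexHull_mono (by intro x hx; simp at hx ⊢; tauto)
  have h0c : (0:ℂ) ∈ convexHull ℝ ({0, (starRingEnd ℂ) (z 2), (starRingEnd ℂ) (z 3)} : Set ℂ) :=
    subset_convexHull ℝ _ (by simp)
  exact ⟨first, hconvc.segment_subset h0c (hsubc hsegc) hwseg, hseg⟩
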